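/- (Lemma: X-basis simulation by the quantum switch, core computation of Lemma obs-2.) Work in ℂ² with standard basis |0⟩, |1⟩, and set |±⟩ := (|0⟩ ± |1⟩)/√2 and |±i⟩ := (|0⟩ ± i|1⟩)/√2. For a1, a2 ∈ {0,1}, define the operator W(a1,a2) on ℂ² ⊗ ℂ² by W(a1,a2) := |+⟩⟨+| ⊗ (|1⟩⟨a2|·|1⟩⟨a1|) + |−⟩⟨−| ⊗ (|1⟩⟨a1|·|1⟩⟨a2|), where the first tensor factor is the control system and the second is the target system. Let v_0 := |+i⟩ and v_1 := |−i⟩. Then for every ψ ∈ ℂ²: Σ_{a2∈{0,1}} Σ_{a3∈{0,1}} ‖(⟨v_{a3}| ⊗ I₂)·W(a1,a2)·(ψ ⊗ |0⟩)‖² equals |⟨+|ψ⟩|² if a1 = 0 and equals |⟨−|ψ⟩|² if a1 = 1. -/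

import Mathlib

/-!
Statement 14: the core computation behind Lemma 2 (`obs-2`) of the paper.
We work with `ℂ²` as `Fin 2 → ℂ` and `ℂ² ⊗ ℂ²` as `Fin 2 × Fin 2 → ℂ`
(control system first, target system second), with the standard Hermitian
inner product (antilinear in the first argument) and its norm.
-/

/-- The standard Hermitian inner product on `ℂ²`, antilinear in the first argument. -/
noncomputable def inn (u v : Fin 2 → ℂ) : ℂ := ∑ i, (starRingEnd ℂ) (u i) * v i

/-- The squared Hermitian norm `‖w‖²` on `ℂ²`. -/
noncomputable def normSqVec (w : Fin 2 → ℂ) : ℝ := ∑ i, Complex.normSq (w i)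

/-- The rank-one operator `|u⟩⟨v| : w ↦ ⟨v, w⟩ • u`, as a matrix. -/
noncomputable def ketbra (u v : Fin 2 → ℂ) : Matrix (Fin 2) (Fin 2) ℂ :=
  Matrix.vecMulVec u (star v)

/-- The basis vector `|0⟩`. -/
def ket0 : Fin 2 → ℂ := ![1, 0]

/-- The basis vector `|1⟩`. -/
def ket1 : Fin 2 → ℂ := ![0, 1]

/-- The computational basis vector `|a⟩` for `a ∈ {0,1}` (`false ↦ |0⟩`, `true ↦ |1⟩`). -/
def ketB (a : Bool) : Fin 2 → ℂ := if a then ket1 else ket0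

/-- `|+⟩ = (|0⟩ + |1⟩)/√2`. -/
noncomputable def ketPlus : Fin 2 → ℂ := (Real.sqrt 2 : ℂ)⁻¹ • (ket0 + ket1)

/-- `|−⟩ = (|0⟩ − |1⟩)/√2`. -/
noncomputable def ketMinus : Fin 2 → ℂ := (Real.sqrt 2 : ℂ)⁻¹ • (ket0 - ket1)

/-- `v_0 = |+i⟩ = (|0⟩ + i|1⟩)/√2` and `v_1 = |−i⟩ = (|0⟩ − i|1⟩)/√2`
(`false ↦ v_0`, `true ↦ v_1`). -/
noncomputable def ketY (a : Bool) : Fin 2 → ℂ :=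
  (Real.sqrt 2 : ℂ)⁻¹ • (ket0 + (if a then -Complex.I else Complex.I) • ket1)

/-- The tensor product `u ⊗ w ∈ ℂ² ⊗ ℂ²`. -/
def tp (u w : Fin 2 → ℂ) : Fin 2 × Fin 2 → ℂ := fun p => u p.1 * w p.2

/-- The partial bra `⟨v| ⊗ I₂ : ℂ² ⊗ ℂ² → ℂ²`, sending `u ⊗ w ↦ ⟨v, u⟩ • w`. -/
noncomputable def braL (v : Fin 2 → ℂ) (w : Fin 2 × Fin 2 → ℂ) : Fin 2 → ℂ :=
  fun j => ∑ i, (starRingEnd ℂ) (v i) * w (i, j)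

/-- The operator
`W(a1,a2) = |+⟩⟨+| ⊗ (|1⟩⟨a2|·|1⟩⟨a1|) + |−⟩⟨−| ⊗ (|1⟩⟨a1|·|1⟩⟨a2|)`
on `ℂ² ⊗ ℂ²` (control ⊗ target), given as a matrix via the Kronecker product. -/
noncomputable def W (a1 a2 : Bool) : Matrix (Fin 2 × Fin 2) (Fin 2 × Fin 2) ℂ :=
  Matrix.kroneckerMap (· * ·) (ketbra ketPlus ketPlus)
      (ketbra ket1 (ketB a2) * ketbra ket1 (ketB a1))
    + Matrix.kroneckerMap (· * ·) (ketbra ketMinus ketMinus)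
      (ketbra ket1 (ketB a1) * ketbra ket1 (ketB a2))

set_option maxHeartbeats 4000000 in
/-- **X-basis simulation by the quantum switch.**  For every `ψ ∈ ℂ²`,
`Σ_{a2,a3} ‖(⟨v_{a3}| ⊗ I₂)·W(a1,a2)·(ψ ⊗ |0⟩)‖²` equals `|⟨+|ψ⟩|²` when `a1 = 0`
and `|⟨−|ψ⟩|²` when `a1 = 1`. -/
theorem stmt14 (ψ : Fin 2 → ℂ) :
    (∑ a2 : Bool, ∑ a3 : Bool,
        normSqVec (braL (ketY a3) ((W false a2).mulVec (tp ψ ket0))))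
      = Complex.normSq (inn ketPlus ψ) ∧
    (∑ a2 : Bool, ∑ a3 : Bool,
        normSqVec (braL (ketY a3) ((W true a2).mulVec (tp ψ ket0))))
      = Complex.normSq (inn ketMinus ψ) := by
  have h2 : ((Real.sqrt 2 : ℂ))⁻¹ * ((Real.sqrt 2 : ℂ))⁻¹ = 2⁻¹ := by
    rw [← mul_inv]
    norm_num [← Complex.ofReal_mul, Real.mul_self_sqrt]
  constructor <;>
  · simp only [Fintype.sum_bool, normSqVec, braL, W, Matrix.mulVec, dotProduct,
      Fintype.sum_prod_type, Fin.sum_univ_two, Matrix.add_apply, Matrix.kroneckerMap_apply,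
      Matrix.mul_apply, ketbra, Matrix.vecMulVec_apply, Pi.star_apply, ketPlus, ketMinus,
      ketY, ketB, ket0, ket1, tp, inn, Pi.add_apply, Pi.sub_apply, Pi.smul_apply,
      smul_eq_mul, Matrix.cons_val_zero, Matrix.cons_val_one, Matrix.head_cons,
      if_true, if_false, Bool.false_eq_true, map_mul, map_inv₀, Complex.conj_I,
      Complex.conj_ofReal, map_neg, map_add, map_sub, map_one, map_zero,
      Complex.normSq_apply, Complex.star_def]
    simp only [Complex.add_re, Complex.add_im, Complex.mul_re, Complex.mul_im,
      Complex.inv_re, Complex.inv_im, Complex.ofReal_re, Complex.ofReal_im,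
      Complex.I_re, Complex.I_im, Complex.neg_re, Complex.neg_im, Complex.one_re,
      Complex.one_im, Complex.zero_re, Complex.zero_im, Complex.sub_re, Complex.sub_im,
      Complex.normSq_apply]
    have hs : Real.sqrt 2 ^ 2 = 2 := Real.sq_sqrt (by norm_num)
    have hne : Real.sqrt 2 ≠ 0 := by positivity
    simp only [mul_zero, zero_mul, add_zero, zero_add, sub_zero, zero_sub, neg_zero, mul_one, neg_neg, div_zero, zero_div]
    field_simp
    generalize hgen : Real.sqrt 2 = s at hs hne ⊢
    have e2 : s^2 = 2 := hs
    have e3 : s^3 = 2*s := by linear_combination s*e2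
    have e4 : s^4 = 4 := by linear_combination (s^2+2)*e2
    have e5 : s^5 = 4*s := by linear_combination (s^3+2*s)*e2
    have e6 : s^6 = 8 := by linear_combination (s^4+2*s^2+4)*e2
    have e7 : s^7 = 8*s := by linear_combination (s^5+2*s^3+4*s)*e2
    have e8 : s^8 = 16 := by linear_combination (s^6+2*s^4+4*s^2+8)*e2
    have e9 : s^9 = 16*s := by linear_combination (s^7+2*s^5+4*s^3+8*s)*e2
    have e10 : s^10 = 32 := by linear_combination (s^8+2*s^6+4*s^4+8*s^2+16)*e2
    have e11 : s^11 = 32*s := by linear_combination (s^9+2*s^7+4*s^5+8*s^3+16*s)*e2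
    have e12 : s^12 = 64 := by linear_combination (s^10+2*s^8+4*s^6+8*s^4+16*s^2+32)*e2
    ring_nf
    try simp only [e2, e3, e4, e5, e6, e7, e8, e9, e10, e11, e12]
    try ring
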